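/- For every finite simple graph G with at least one vertex and every natural number k, the independence number of the pebble configuration graph satisfies α(G[k]) ≥ C(k + α(G) − 1, α(G) − 1), where C(·,·) denotes the binomial coefficient. Indeed, if W ⊆ V is an independent set of G, then the configurations of weight k supported on W form an independent set of G[k] of size C(k + |W| − 1, |W| − 1). -/

import Mathlib

open Finset

/-- A configuration of `k` identical pebbles on the vertex set `V`. -/
def Config (V : Type*) [Fintype V] (k : ℕ) : Type _ :=
  {f : V → ℕ // ∑ v, f v = k}

/-- The pebble configuration graph `G[k]`: two distinct configurations are adjacent
iff there is a transport `m` moving each pebble along an edge of `G` or keeping it in place. -/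
def PebbleGraph {V : Type*} [Fintype V] (G : SimpleGraph V) (k : ℕ) :
    SimpleGraph (Config V k) where
  Adj f g := f ≠ g ∧ ∃ m : V → V → ℕ,
    (∀ u w, m u w ≠ 0 → u = w ∨ G.Adj u w) ∧
    (∀ u, ∑ w, m u w = f.1 u) ∧ (∀ u, ∑ w, m w u = g.1 u)
  symm := ⟨by
    rintro f g ⟨hne, m, h1, h2, h3⟩
    exact ⟨hne.symm, fun u w => m w u,
      fun u w h => (h1 w u h).imp Eq.symm fun h => G.symm.symm _ _ h, h3, h2⟩⟩
  loopless := ⟨fun f h => h.1 rfl⟩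

/-- The independence number of a graph: the supremum of sizes of finite sets of
pairwise non-adjacent vertices. -/
noncomputable def indepNum {W : Type*} (G : SimpleGraph W) : ℕ :=
  sSup {n | ∃ s : Finset W, (↑s : Set W).Pairwise (fun a b => ¬ G.Adj a b) ∧ s.card = n}

/-- The 5-cycle on vertices `Fin 5`, with `u` adjacent to `u + 1` (mod 5). -/
def C5 : SimpleGraph (Fin 5) where
  Adj u w := u ≠ w ∧ (w = u + 1 ∨ u = w + 1)
  symm := ⟨fun _ _ h => ⟨h.1.symm, h.2.symm⟩⟩
  loopless := ⟨fun _ h => h.1 rfl⟩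

section Aux

variable {V : Type*} [Fintype V]

/-- A configuration of `k` pebbles assigns at most `k` pebbles to each vertex,
so `Config V k` is finite. -/
noncomputable instance {k : ℕ} : Fintype (Config V k) := by
  classical
  exact Fintype.ofInjective
    (fun f : Config V k => fun v : V =>
      (⟨f.1 v, Nat.lt_succ_of_le ((Finset.single_le_sum
        (fun i _ => Nat.zero_le (f.1 i)) (Finset.mem_univ v)).trans (le_of_eq f.2))⟩
          : Fin (k + 1)))
    (fun f g h => Subtype.ext (funext fun v => congrArg Fin.val (congrFun h v)))

lemma sum_subtype_of_support (W : Finset V) (f : V → ℕ) (hf : ∀ v ∉ W, f v = 0) :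
    ∑ w : ↥W, f ↑w = ∑ v, f v := by
  rw [Finset.sum_coe_sort W f]
  exact Finset.sum_subset (Finset.subset_univ W) (fun x _ hx => hf x hx)

lemma sum_dite_mem (W : Finset V) (c : ∀ v : V, v ∈ W → ℕ) [DecidableEq V] :
    ∑ v : V, (if h : v ∈ W then c v h else 0) = ∑ w : ↥W, c w w.2 := by
  rw [← sum_subtype_of_support W (fun v => if h : v ∈ W then c v h else 0)
      (fun v hv => dif_neg hv)]
  exact Finset.sum_congr rfl fun w _ => by simp [w.2]

/-- Configurations of weight `k` supported on `W` correspond bijectively to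
multisets of `k` elements of `W` (stars and bars). -/
noncomputable def pebbleSupportEquiv (W : Finset V) (k : ℕ) :
    {f : Config V k | ∀ v ∉ W, f.1 v = 0} ≃ Sym (↥W) k := by
  classical
  exact
  { toFun := fun f =>
      ⟨Finsupp.toMultiset (Finsupp.equivFunOnFinite.symm fun w : ↥W => f.1.1 ↑w), by
        rw [← Multiset.sum_count_eq_card (s := Finset.univ) (fun a _ => Finset.mem_univ a)]
        simp only [Finsupp.count_toMultiset, Finsupp.coe_equivFunOnFinite_symm]
        rw [sum_subtype_of_support W _ f.2]
        exact f.1.2⟩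
    invFun := fun m =>
      ⟨⟨fun v => if h : v ∈ W then m.1.count ⟨v, h⟩ else 0, by
        show ∑ v : V, (if h : v ∈ W then m.1.count ⟨v, h⟩ else 0) = k
        rw [sum_dite_mem W (fun v h => m.1.count ⟨v, h⟩)]
        rw [Multiset.sum_count_eq_card (fun a _ => Finset.mem_univ a)]
        exact m.2⟩, fun v hv => dif_neg hv⟩
    left_inv := fun f => by
      apply Subtype.ext; apply Subtype.ext; funext v
      by_cases h : v ∈ W
      · simp [h, Finsupp.count_toMultiset]
      · simp only [dif_neg h]
        exact (f.2 v h).symm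
    right_inv := fun m => by
      apply Subtype.ext
      ext a
      simp [Finsupp.count_toMultiset, a.2] }

/-- If `W` is independent in `G`, configurations supported on `W` are pairwise
non-adjacent in the pebble graph. -/
lemma pebble_pairwise {G : SimpleGraph V} {k : ℕ} {W : Finset V}
    (hind : (↑W : Set V).Pairwise (fun a b => ¬ G.Adj a b)) :
    ({f : Config V k | ∀ v ∉ W, f.1 v = 0} : Set (Config V k)).Pairwise
      (fun f g => ¬ (PebbleGraph G k).Adj f g) := by
  rintro f hf g hg hne ⟨-, m, h1, h2, h3⟩
  have key : ∀ u w, u ≠ w → m u w = 0 := by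
    intro u w huw
    by_contra hm
    rcases h1 u w hm with rfl | hadj
    · exact huw rfl
    have hu : u ∈ W := by
      by_contra h
      exact hm (Finset.sum_eq_zero_iff.1 ((h2 u).trans (hf u h)) w (Finset.mem_univ w))
    have hw : w ∈ W := by
      by_contra h
      exact hm (Finset.sum_eq_zero_iff.1 ((h3 w).trans (hg w h)) u (Finset.mem_univ u))
    exact hind hu hw huw hadj
  refine hne (Subtype.ext (funext fun u => ?_))
  calc f.1 u = ∑ w, m u w := (h2 u).symm
    _ = m u u := Finset.sum_eq_single_of_mem u (Finset.mem_univ u)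
        (fun b _ hb => key u b (Ne.symm hb))
    _ = ∑ w, m w u := (Finset.sum_eq_single_of_mem u (Finset.mem_univ u)
        (fun b _ hb => key b u hb)).symm
    _ = g.1 u := h3 u

/-- The number of configurations of weight `k` supported on a nonempty `W`. -/
lemma pebble_ncard {k : ℕ} (W : Finset V) (hW : W.Nonempty) :
    {f : Config V k | ∀ v ∉ W, f.1 v = 0}.ncard = (k + W.card - 1).choose (W.card - 1) := by
  classical
  rw [← Nat.card_coe_set_eq, Nat.card_congr (pebbleSupportEquiv W k),
    Nat.card_eq_fintype_card, Sym.card_sym_eq_choose, Fintype.card_coe]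
  have hc : 1 ≤ W.card := Finset.card_pos.2 hW
  have h1 : W.card - 1 ≤ k + W.card - 1 := by omega
  rw [← Nat.choose_symm h1, show k + W.card - 1 - (W.card - 1) = k by omega,
    show W.card + k - 1 = k + W.card - 1 by omega]

end Aux

/-- `α(G[k]) ≥ C(k + α(G) − 1, α(G) − 1)`; indeed, for every nonempty independent set
`W` of `G`, the configurations of weight `k` supported on `W` form an independent set
of `G[k]` of size `C(k + |W| − 1, |W| − 1)`. -/
theorem choose_le_alpha_pebble {V : Type*} [Fintype V] [Nonempty V]
    (G : SimpleGraph V) (k : ℕ) :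
    (k + indepNum G - 1).choose (indepNum G - 1) ≤ indepNum (PebbleGraph G k) ∧
    ∀ W : Finset V, W.Nonempty →
      (↑W : Set V).Pairwise (fun a b => ¬ G.Adj a b) →
      ({f : Config V k | ∀ v ∉ W, f.1 v = 0} : Set (Config V k)).Pairwise
          (fun f g => ¬ (PebbleGraph G k).Adj f g) ∧
        {f : Config V k | ∀ v ∉ W, f.1 v = 0}.ncard =
          (k + W.card - 1).choose (W.card - 1) := by
  classical
  have H : ∀ W : Finset V, W.Nonempty →
      (↑W : Set V).Pairwise (fun a b => ¬ G.Adj a b) →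
      ({f : Config V k | ∀ v ∉ W, f.1 v = 0} : Set (Config V k)).Pairwise
          (fun f g => ¬ (PebbleGraph G k).Adj f g) ∧
        {f : Config V k | ∀ v ∉ W, f.1 v = 0}.ncard =
          (k + W.card - 1).choose (W.card - 1) :=
    fun W hW hind => ⟨pebble_pairwise hind, pebble_ncard W hW⟩
  refine ⟨?_, H⟩
  set A := {n | ∃ s : Finset V, (↑s : Set V).Pairwise (fun a b => ¬ G.Adj a b) ∧ s.card = n}
  have hbddA : BddAbove A := ⟨Fintype.card V, by rintro n ⟨s, -, rfl⟩; exact s.card_le_univ⟩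
  have h1A : 1 ∈ A := by
    refine ⟨{Classical.arbitrary V}, ?_, Finset.card_singleton _⟩
    simp [Set.pairwise_singleton]
  have hmem : indepNum G ∈ A := Nat.sSup_mem ⟨1, h1A⟩ hbddA
  obtain ⟨W, hWind, hWcard⟩ := hmem
  have hW1 : 1 ≤ indepNum G := le_csSup hbddA h1A
  have hWne : W.Nonempty := Finset.card_pos.1 (by omega)
  obtain ⟨hpair, hcard⟩ := H W hWne hWind
  rw [hWcard] at hcard
  set S := {f : Config V k | ∀ v ∉ W, f.1 v = 0}
  have hfin : S.Finite := Set.toFinite S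
  have hx : (k + indepNum G - 1).choose (indepNum G - 1) ∈
      {n | ∃ s : Finset (Config V k),
        (↑s : Set (Config V k)).Pairwise (fun a b => ¬ (PebbleGraph G k).Adj a b) ∧
          s.card = n} := by
    refine ⟨hfin.toFinset, ?_, ?_⟩
    · rw [Set.Finite.coe_toFinset]; exact hpair
    · rw [← Set.ncard_eq_toFinset_card S hfin]; exact hcard
  exact le_csSup ⟨Fintype.card (Config V k), by rintro n ⟨s, -, rfl⟩; exact s.card_le_univ⟩ hx
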